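/- Let A and B be connected simple graphs, each with at least two vertices, and let f : V(A) → V(B) be a function such that the Sierpiński product A ⊗_f B is 3-connected. Then the image of f has at least 2 elements; moreover, if B has at least three vertices, then the image of f has at least 3 elements. -/

import Mathlib

/-- The Sierpiński product of simple graphs `A` and `B` with respect to `f : V(A) → V(B)`:
vertices are pairs `(a, b)`; two vertices are adjacent iff they lie in the same fibre and
their second coordinates are adjacent in `B`, or their first coordinates are adjacent in `A`
and the second coordinates are given by `f` applied to the other first coordinate. -/
def SierpinskiProd {α β : Type*} (A : SimpleGraph α) (B : SimpleGraph β)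
    (f : α → β) : SimpleGraph (α × β) where
  Adj p q := (p.1 = q.1 ∧ B.Adj p.2 q.2) ∨
    (A.Adj p.1 q.1 ∧ p.2 = f q.1 ∧ q.2 = f p.1)
  symm := by
    constructor
    rintro ⟨a₁, b₁⟩ ⟨a₂, b₂⟩ (⟨h, hB⟩ | ⟨hA, h₁, h₂⟩)
    · exact Or.inl ⟨h.symm, hB.symm⟩
    · exact Or.inr ⟨hA.symm, h₂, h₁⟩
  loopless := by
    constructor
    rintro ⟨a, b⟩ (⟨_, hB⟩ | ⟨hA, _, _⟩)
    · exact B.irrefl hB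
    · exact A.irrefl hA

/-- A vertex `v` of a graph `G` is a separating vertex if deleting `v` (taking the induced
subgraph on the remaining vertices) yields a graph that is not connected. -/
def IsSeparatingVertex {V : Type*} (G : SimpleGraph V) (v : V) : Prop :=
  ¬ (G.induce ({v}ᶜ : Set V)).Connected

/-- A graph `G` is `k`-connected if it has more than `k` vertices and deleting any set of
fewer than `k` vertices leaves a connected graph. -/
def KConnected {V : Type*} [Fintype V] (k : ℕ) (G : SimpleGraph V) : Prop :=
  k < Fintype.card V ∧ ∀ S : Set V, S.ncard < k → (G.induce Sᶜ).Connected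

/-- `W` is a cut-set of `G` if deleting all vertices of `W` strictly increases the number of
connected components. -/
def IsCutSet {V : Type*} (G : SimpleGraph V) (W : Set V) : Prop :=
  Nat.card G.ConnectedComponent < Nat.card (G.induce Wᶜ).ConnectedComponent

/-- `W` is a minimal cut-set of `G` if it is a cut-set and no proper subset is a cut-set. -/
def IsMinCutSet {V : Type*} (G : SimpleGraph V) (W : Set V) : Prop :=
  IsCutSet G W ∧ ∀ W' ⊂ W, ¬ IsCutSet G W'

lemma sierpinski_key {α β : Type*} [Fintype α] [Fintype β]
    (A : SimpleGraph α) (B : SimpleGraph β) (f : α → β)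
    (hcardA : 2 ≤ Fintype.card α)
    (h3 : KConnected 3 (SierpinskiProd A B f))
    (hlt : (Set.range f).ncard < Fintype.card β)
    (h3' : (Set.range f).ncard < 3) : False := by
  obtain ⟨a₀, a₁, hne⟩ := Fintype.exists_pair_of_one_lt_card (by omega : 1 < Fintype.card α)
  obtain ⟨b₂, hb₂⟩ : ∃ b, b ∉ Set.range f := by
    by_contra h
    push_neg at h
    rw [Set.eq_univ_of_forall h, Set.ncard_univ, Nat.card_eq_fintype_card] at hlt
    exact lt_irrefl _ hlt
  set S : Set (α × β) := (fun b => (a₀, b)) '' Set.range f with hSdef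
  have hScard : S.ncard = (Set.range f).ncard :=
    Set.ncard_image_of_injective _ (fun x y h => (Prod.ext_iff.mp h).2)
  have hconn := h3.2 S (by rw [hScard]; exact h3')
  have hu : (a₀, b₂) ∈ Sᶜ := by
    rintro ⟨b, hb, hbe⟩
    simp only [Prod.mk.injEq] at hbe
    exact hb₂ (hbe.2 ▸ hb)
  have hv : (a₁, b₂) ∈ Sᶜ := by
    rintro ⟨b, hb, hbe⟩
    simp only [Prod.mk.injEq] at hbe
    exact hne hbe.1
  have step : ∀ (p q : ↥(Sᶜ)), ((SierpinskiProd A B f).induce Sᶜ).Adj p q →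
      (p : α × β).1 = a₀ → (q : α × β).1 = a₀ := by
    rintro ⟨⟨pa, pb⟩, hp⟩ ⟨⟨qa, qb⟩, hq⟩ hadj h1
    have h1' : pa = a₀ := h1
    have hadj' : (SierpinskiProd A B f).Adj (pa, pb) (qa, qb) := hadj
    rcases hadj' with ⟨h, _⟩ | ⟨hA', he1, he2⟩
    · exact h.symm.trans h1'
    · exact absurd (show (pa, pb) ∈ S from ⟨pb, ⟨qa, he1.symm⟩, by rw [h1']⟩) hp
  have main : ∀ {p q : ↥(Sᶜ)} (_ : ((SierpinskiProd A B f).induce Sᶜ).Walk p q),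
      (p : α × β).1 = a₀ → (q : α × β).1 = a₀ := by
    intro p q w
    induction w with
    | nil => exact id
    | cons h _ ih => exact fun hp => ih (step _ _ h hp)
  obtain ⟨w⟩ := hconn.preconnected ⟨(a₀, b₂), hu⟩ ⟨(a₁, b₂), hv⟩
  exact hne (main w rfl).symm

/-- **Corollary.** If `A ⊗_f B` is `3`-connected (`A`, `B` connected nontrivial), then the
image of `f` has at least two elements; if moreover `B` has at least three vertices, the
image of `f` has at least three elements. -/
theorem sierpinski_three_connected_image {α β : Type*} [Fintype α] [Fintype β]
    (A : SimpleGraph α) (B : SimpleGraph β) (f : α → β)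
    (hA : A.Connected) (hB : B.Connected)
    (hcardA : 2 ≤ Fintype.card α) (hcardB : 2 ≤ Fintype.card β)
    (h3 : KConnected 3 (SierpinskiProd A B f)) :
    2 ≤ (Set.range f).ncard ∧ (3 ≤ Fintype.card β → 3 ≤ (Set.range f).ncard) := by
  constructor
  · by_contra h
    push_neg at h
    exact sierpinski_key A B f hcardA h3 (lt_of_lt_of_le h hcardB) (by omega)
  · intro h3β
    by_contra h
    push_neg at h
    exact sierpinski_key A B f hcardA h3 (lt_of_lt_of_le h h3β) h
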